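/- Under the recurrences q(s−u) = α^u + q(−1)(1−α)∑_{k=0}^{u−1} α^k for 0 < u < s, and q(−(f−v)) = q(1)·α·∑_{k=0}^{v−1}(1−α)^k for 0 < v < f, together with q(0) = α·q(1) + (1−α)·q(−1), the values q(1) and q(−1) satisfy q(1) = α^{s−1} + q(−1)(1−α)∑_{k=0}^{s−2} α^k and q(−1) = q(1)·α·∑_{k=0}^{f−2}(1−α)^k, and this 2×2 linear system has a unique solution whenever 0 < α < 1, s > 1, f > 1. -/

import Mathlib

/-- From the closed recurrences for the run-race absorption probabilities,
`q 1` and `q (-1)` satisfy the stated 2×2 linear system, and this system has a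
unique solution whenever `0 < α < 1`, `s > 1`, `f > 1`. -/
theorem stmt_6 (α : ℝ) (hα0 : 0 < α) (hα1 : α < 1) (s f : ℕ) (hs : 1 < s) (hf : 1 < f)
    (q : ℤ → ℝ)
    (hup : ∀ u : ℕ, 0 < u → u < s →
        q ((s : ℤ) - u) = α ^ u + q (-1) * (1 - α) * (∑ k ∈ Finset.range u, α ^ k))
    (hdown : ∀ v : ℕ, 0 < v → v < f →
        q (-((f : ℤ) - v)) = q 1 * α * (∑ k ∈ Finset.range v, (1 - α) ^ k))
    (h0 : q 0 = α * q 1 + (1 - α) * q (-1)) :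
    (q 1 = α ^ (s - 1) + q (-1) * (1 - α) * (∑ k ∈ Finset.range (s - 1), α ^ k) ∧
     q (-1) = q 1 * α * (∑ k ∈ Finset.range (f - 1), (1 - α) ^ k)) ∧
    (∃! p : ℝ × ℝ,
        p.1 = α ^ (s - 1) + p.2 * (1 - α) * (∑ k ∈ Finset.range (s - 1), α ^ k) ∧
        p.2 = p.1 * α * (∑ k ∈ Finset.range (f - 1), (1 - α) ^ k)) := by
  have h1 : q 1 = α ^ (s - 1) + q (-1) * (1 - α) * (∑ k ∈ Finset.range (s - 1), α ^ k) := by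
    have := hup (s - 1) (by omega) (by omega)
    have hc : (s : ℤ) - ((s - 1 : ℕ) : ℤ) = 1 := by
      have : ((s - 1 : ℕ) : ℤ) = (s : ℤ) - 1 := by omega
      omega
    rwa [hc] at this
  have h2 : q (-1) = q 1 * α * (∑ k ∈ Finset.range (f - 1), (1 - α) ^ k) := by
    have := hdown (f - 1) (by omega) (by omega)
    have hc : -((f : ℤ) - ((f - 1 : ℕ) : ℤ)) = -1 := by
      have : ((f - 1 : ℕ) : ℤ) = (f : ℤ) - 1 := by omega
      omega
    rwa [hc] at this
  refine ⟨⟨h1, h2⟩, ?_⟩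
  set S1 := ∑ k ∈ Finset.range (s - 1), α ^ k with hS1
  set S2 := ∑ k ∈ Finset.range (f - 1), (1 - α) ^ k with hS2
  have hA : (1 - α) * S1 = 1 - α ^ (s - 1) := by
    have := geom_sum_mul α (s - 1)
    rw [hS1]; nlinarith [this]
  have hB : α * S2 = 1 - (1 - α) ^ (f - 1) := by
    have := geom_sum_mul (1 - α) (f - 1)
    rw [hS2]; nlinarith [this]
  have hA0 : 0 < (1 - α) * S1 := by
    rw [hA]
    have : α ^ (s - 1) < 1 := pow_lt_one₀ hα0.le hα1 (by omega)
    linarith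
  have hA1 : (1 - α) * S1 < 1 := by
    rw [hA]
    have : 0 < α ^ (s - 1) := pow_pos hα0 _
    linarith
  have hB0 : 0 < α * S2 := by
    rw [hB]
    have : (1 - α) ^ (f - 1) < 1 := pow_lt_one₀ (by linarith) (by linarith) (by omega)
    linarith
  have hB1 : α * S2 < 1 := by
    rw [hB]
    have : 0 < (1 - α) ^ (f - 1) := pow_pos (by linarith) _
    linarith
  have hc1 : ((1 - α) * S1) * (α * S2) < 1 := by nlinarith
  have hne : 1 - ((1 - α) * S1) * (α * S2) ≠ 0 := by nlinarith
  set a := α ^ (s - 1)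
  refine ⟨(a / (1 - ((1 - α) * S1) * (α * S2)),
           a / (1 - ((1 - α) * S1) * (α * S2)) * (α * S2)), ⟨?_, ?_⟩, ?_⟩
  · linear_combination (div_mul_cancel₀ a hne)
  · ring
  · rintro ⟨x, y⟩ ⟨hx, hy⟩
    simp only at hx hy ⊢
    have hx' : x * (1 - ((1 - α) * S1) * (α * S2)) = a := by
      rw [hy] at hx; nlinarith [hx]
    have hxv : x = a / (1 - ((1 - α) * S1) * (α * S2)) := by
      rw [eq_div_iff hne]
      linarith [hx']
    exact Prod.ext hxv (by rw [hy, hxv]; ring)
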